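/- arXiv:2206.08086 — 5 statements merged into one kernel-verified Lean document; each statement's English description precedes it below -/
import Mathlib

section
/- Let x_1,…,x_N be unit vectors in ℝ³ with x_i ≠ ±x_j whenever i ≠ j. Then the 2N vectors x_1,…,x_N,−x_1,…,−x_N are distinct and E^P_log(x_1,…,x_N) = (1/2)·E_log({x_1,…,x_N} ∪ {−x_1,…,−x_N}) + N²·log 2. -/
open scoped Real RealInnerProductSpace Classical

noncomputable section

/-- Points of `ℝ³` (unit vectors represent points of `S²` and of `RP²`). -/
abbrev Esp := EuclideanSpace ℝ (Fin 3)

/-- Logarithmic energy of a finite set of points: sum over ordered pairs of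
distinct points of `log (1/‖x - y‖)`. -/
def Elog (ω : Finset Esp) : ℝ :=
  ∑ x ∈ ω, ∑ y ∈ ω, if x = y then 0 else Real.log (1 / ‖x - y‖)

/-- Projective logarithmic energy of `x₁,…,x_N`:
`-∑_{i ≠ j} log √(1 - ⟨x_i, x_j⟩²)` over ordered pairs of distinct indices. -/
def EPlog {N : ℕ} (x : Fin N → Esp) : ℝ :=
  -∑ i, ∑ j, if i = j then 0 else Real.log (Real.sqrt (1 - ⟪x i, x j⟫^2))

/-- If `x₁,…,x_N` are unit vectors with `x_i ≠ ±x_j` for `i ≠ j`, then the `2N` vectors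
`x₁,…,x_N, -x₁,…,-x_N` are distinct and
`E^P_log(x₁,…,x_N) = (1/2)·E_log({x₁,…,x_N} ∪ {-x₁,…,-x_N}) + N²·log 2`. -/
theorem projective_energy_eq_half_spherical_energy
    (N : ℕ) (x : Fin N → Esp) (hx : ∀ i, ‖x i‖ = 1)
    (hdist : ∀ i j, i ≠ j → x i ≠ x j ∧ x i ≠ -x j) :
    Function.Injective (Sum.elim x (fun i => -x i) : Fin N ⊕ Fin N → Esp) ∧
    EPlog x = (1/2) * Elog ((Finset.univ.image x) ∪ (Finset.univ.image fun i => -x i))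
      + (N:ℝ)^2 * Real.log 2 := by
  classical
  -- no point equals minus a point
  have hxne : ∀ i j, x i ≠ -x j := by
    intro i j h
    by_cases hij : i = j
    · subst hij
      have h2 : (2:ℝ) • x i = 0 := by
        rw [two_smul]; nth_rewrite 1 [h]; exact neg_add_cancel _
      have h3 : x i = 0 := by
        rcases smul_eq_zero.mp h2 with h' | h'
        · norm_num at h'
        · exact h'
      have := hx i
      rw [h3, norm_zero] at this
      norm_num at this
    · exact (hdist i j hij).2 h
  set f : Fin N ⊕ Fin N → Esp := Sum.elim x (fun i => -x i) with hf
  have hinj : Function.Injective f := by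
    rintro (i | i) (j | j) h <;> simp only [hf, Sum.elim_inl, Sum.elim_inr] at h
    · by_cases hij : i = j
      · exact congrArg Sum.inl hij
      · exact absurd h (hdist i j hij).1
    · exact absurd h (hxne i j)
    · exact absurd h.symm (hxne j i)
    · have h' : x i = x j := neg_injective h
      by_cases hij : i = j
      · exact congrArg Sum.inr hij
      · exact absurd h' (hdist i j hij).1
  refine ⟨hinj, ?_⟩
  -- norms of differences and sums are nonzero off the bad sets
  have hsubne : ∀ i j, i ≠ j → ‖x i - x j‖ ≠ 0 := fun i j hij h =>
    (hdist i j hij).1 (sub_eq_zero.mp (norm_eq_zero.mp h))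
  have haddne : ∀ i j, ‖x i + x j‖ ≠ 0 := fun i j h =>
    hxne i j (eq_neg_of_add_eq_zero_left (norm_eq_zero.mp h))
  have hdiag : ∀ i, ‖x i + x i‖ = 2 := by
    intro i
    rw [← two_smul ℝ (x i), norm_smul, hx i]
    norm_num
  -- the union is the image of f
  have hωeq : (Finset.univ.image x) ∪ (Finset.univ.image fun i => -x i)
      = Finset.image f Finset.univ := by
    ext v
    simp [hf, Sum.exists]
  -- abbreviations
  set A : ℝ := ∑ i, ∑ j, (if i = j then 0 else Real.log (1/‖x i - x j‖)) with hA
  set B : ℝ := ∑ i, ∑ j, (if i = j then 0 else Real.log (1/‖x i + x j‖)) with hB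
  -- Elog as a sum over the sum type
  have hi : ∀ p ∈ (Finset.univ : Finset (Fin N ⊕ Fin N)), ∀ q ∈ (Finset.univ : Finset (Fin N ⊕ Fin N)),
      f p = f q → p = q := fun p _ q _ h => hinj h
  have hElog : Elog ((Finset.univ.image x) ∪ (Finset.univ.image fun i => -x i))
      = 2*A + 2*B + 2*(N * Real.log (1/2)) := by
    rw [hωeq]
    unfold Elog
    rw [Finset.sum_image hi]
    have step : ∀ a : Fin N ⊕ Fin N,
        (∑ y ∈ Finset.image f Finset.univ, if f a = y then 0 else Real.log (1/‖f a - y‖))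
        = ∑ b, if a = b then 0 else Real.log (1/‖f a - f b‖) := by
      intro a
      rw [Finset.sum_image hi]
      exact Finset.sum_congr rfl fun b _ => if_congr hinj.eq_iff rfl rfl
    simp only [step]
    rw [Fintype.sum_sum_type]
    simp only [Fintype.sum_sum_type, hf, Sum.elim_inl, Sum.elim_inr, Sum.inl.injEq,
      Sum.inr.injEq, reduceCtorEq, if_false]
    have e1 : ∀ i j : Fin N, ‖x i - -x j‖ = ‖x i + x j‖ := by
      intro i j; rw [sub_neg_eq_add]
    have e2 : ∀ i j : Fin N, ‖-x i - x j‖ = ‖x i + x j‖ := by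
      intro i j
      rw [show -x i - x j = -(x i + x j) by abel, norm_neg]
    have e3 : ∀ i j : Fin N, ‖-x i - -x j‖ = ‖x j - x i‖ := by
      intro i j; rw [neg_sub_neg]
    simp only [e1, e2, e3]
    have hBsplit : ∀ i j : Fin N, Real.log (1/‖x i + x j‖)
        = (if i = j then 0 else Real.log (1/‖x i + x j‖)) + (if i = j then Real.log (1/2) else 0) := by
      intro i j
      by_cases hij : i = j
      · subst hij; simp [hdiag i]
      · simp [hij]
    have hBsum : (∑ i, ∑ j, Real.log (1/‖x i + x j‖)) = B + N * Real.log (1/2) := by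
      calc (∑ i, ∑ j, Real.log (1/‖x i + x j‖))
          = ∑ i, ∑ j, ((if i = j then 0 else Real.log (1/‖x i + x j‖))
              + (if i = j then Real.log (1/2) else 0)) := by
            exact Finset.sum_congr rfl fun i _ => Finset.sum_congr rfl fun j _ => hBsplit i j
        _ = B + N * Real.log (1/2) := by
            simp only [Finset.sum_add_distrib, hB]
            congr 1
            simp [Finset.sum_ite_eq, Finset.card_univ]
    have hDsum : (∑ i, ∑ j, (if i = j then 0 else Real.log (1/‖x j - x i‖))) = A := by
      rw [hA]
      refine Finset.sum_congr rfl fun i _ => Finset.sum_congr rfl fun j _ => ?_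
      rw [norm_sub_rev]
    simp only [Finset.sum_add_distrib]
    rw [hBsum, hDsum, ← hA]
    ring
  -- the pointwise projective identity
  have hkey : ∀ i j : Fin N, i ≠ j →
      (if i = j then (0:ℝ) else Real.log (Real.sqrt (1 - ⟪x i, x j⟫^2)))
      = Real.log (Real.sqrt (1 - ⟪x i, x j⟫^2)) := fun i j hij => by simp [hij]
  have hpt : ∀ i j : Fin N, i ≠ j →
      -Real.log (Real.sqrt (1 - ⟪x i, x j⟫^2))
      = Real.log (1/‖x i - x j‖) + Real.log (1/‖x i + x j‖) + Real.log 2 := by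
    intro i j hij
    set t : ℝ := ⟪x i, x j⟫ with ht
    have h1 : ‖x i - x j‖^2 = 2 - 2*t := by
      rw [norm_sub_sq_real, hx i, hx j]; ring
    have h2 : ‖x i + x j‖^2 = 2 + 2*t := by
      rw [norm_add_sq_real, hx i, hx j]; ring
    have hq : (‖x i - x j‖ * ‖x i + x j‖ / 2)^2 = 1 - t^2 := by
      rw [div_pow, mul_pow, h1, h2]; ring
    have hs : Real.sqrt (1 - t^2) = ‖x i - x j‖ * ‖x i + x j‖ / 2 := by
      rw [← hq, Real.sqrt_sq (by positivity)]
    rw [hs, Real.log_div (mul_ne_zero (hsubne i j hij) (haddne i j)) two_ne_zero,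
      Real.log_mul (hsubne i j hij) (haddne i j), one_div, one_div, Real.log_inv, Real.log_inv]
    ring
  -- compute EPlog
  have hEP : EPlog x = A + B + ((N:ℝ)^2 * Real.log 2 - N * Real.log 2) := by
    unfold EPlog
    rw [← Finset.sum_neg_distrib]
    calc (∑ i, -∑ j, (if i = j then 0 else Real.log (Real.sqrt (1 - ⟪x i, x j⟫^2))))
        = ∑ i, ∑ j, ((if i = j then 0 else Real.log (1/‖x i - x j‖))
            + (if i = j then 0 else Real.log (1/‖x i + x j‖))
            + (if i = j then 0 else Real.log 2)) := by
          refine Finset.sum_congr rfl fun i _ => ?_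
          rw [← Finset.sum_neg_distrib]
          refine Finset.sum_congr rfl fun j _ => ?_
          by_cases hij : i = j
          · simp [hij]
          · simp only [hij, if_false]
            rw [hpt i j hij]
      _ = A + B + ((N:ℝ)^2 * Real.log 2 - N * Real.log 2) := by
          simp only [Finset.sum_add_distrib, ← hA, ← hB]
          congr 1
          have hc : ∀ i : Fin N, (∑ j, if i = j then (0:ℝ) else Real.log 2)
              = N * Real.log 2 - Real.log 2 := by
            intro i
            calc (∑ j, if i = j then (0:ℝ) else Real.log 2)
                = ∑ j : Fin N, (Real.log 2 - if i = j then Real.log 2 else 0) := by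
                  refine Finset.sum_congr rfl fun j _ => ?_
                  by_cases hij : i = j <;> simp [hij]
              _ = N * Real.log 2 - Real.log 2 := by
                  rw [Finset.sum_sub_distrib]
                  simp [Finset.sum_ite_eq, Finset.card_univ, mul_comm]
          simp only [hc, Finset.sum_sub_distrib, Finset.sum_const, Finset.card_univ,
            Fintype.card_fin, nsmul_eq_mul]
          ring
  rw [hEP, hElog]
  have hlog : Real.log (1/2) = -Real.log 2 := by
    rw [one_div, Real.log_inv]
  rw [hlog]
  ring
end
end

section
/- For every integer N ≥ 1, let m_{2N} denote the minimum of E_log over all sets of 2N distinct points on the unit sphere S². Then for every collection x_1,…,x_N of unit vectors in ℝ³ with x_i ≠ ±x_j whenever i ≠ j, one has E^P_log(x_1,…,x_N) ≥ (1/2)·m_{2N} + N²·log 2. -/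
open scoped Real RealInnerProductSpace Classical

noncomputable section

/-- `m_{2N}`: the minimum of the logarithmic energy over all sets of `2N` distinct
points on the unit sphere. -/
def minEnergy (n : ℕ) : ℝ :=
  sInf {e : ℝ | ∃ ω : Finset Esp, ω.card = n ∧ (∀ p ∈ ω, ‖p‖ = 1) ∧ e = Elog ω}

/-- Chordal identity: `√(1 - ⟨a,b⟩²) = ‖a-b‖‖a+b‖/2` for unit vectors. -/
lemma sqrt_inner_eq (a b : Esp) (ha : ‖a‖ = 1) (hb : ‖b‖ = 1) :
    Real.sqrt (1 - ⟪a, b⟫^2) = ‖a - b‖ * ‖a + b‖ / 2 := by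
  have h1 : ‖a - b‖^2 = 2 - 2 * ⟪a, b⟫ := by
    rw [norm_sub_sq_real, ha, hb]; ring
  have h2 : ‖a + b‖^2 = 2 + 2 * ⟪a, b⟫ := by
    rw [norm_add_sq_real, ha, hb]; ring
  have e : 1 - ⟪a, b⟫^2 = (‖a - b‖ * ‖a + b‖ / 2)^2 := by
    have : (‖a - b‖ * ‖a + b‖ / 2)^2 = ‖a - b‖^2 * ‖a + b‖^2 / 4 := by ring
    rw [this, h1, h2]; ring
  rw [e, Real.sqrt_sq (by positivity)]

/-- Each energy term is bounded below by `-log 2` for unit vectors. -/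
lemma term_lower (p q : Esp) (hp : ‖p‖ = 1) (hq : ‖q‖ = 1) :
    -Real.log 2 ≤ (if p = q then (0:ℝ) else Real.log (1 / ‖p - q‖)) := by
  by_cases h : p = q
  · simp [h]
    exact Real.log_nonneg one_le_two
  · rw [if_neg h]
    have hpos : 0 < ‖p - q‖ := by
      rw [norm_pos_iff, sub_ne_zero]; exact h
    have hle : ‖p - q‖ ≤ 2 := by
      calc ‖p - q‖ ≤ ‖p‖ + ‖q‖ := norm_sub_le p q
        _ = 2 := by rw [hp, hq]; norm_num
    have : Real.log (1/2) ≤ Real.log (1 / ‖p - q‖) :=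
      Real.log_le_log (by norm_num) (by
        apply one_div_le_one_div_of_le hpos hle)
    calc -Real.log 2 = Real.log (1/2) := by
          rw [one_div, Real.log_inv]
      _ ≤ _ := this

lemma bddBelow_energy (n : ℕ) :
    BddBelow {e : ℝ | ∃ ω : Finset Esp, ω.card = n ∧ (∀ p ∈ ω, ‖p‖ = 1) ∧ e = Elog ω} := by
  refine ⟨(n:ℝ)^2 * (-Real.log 2), ?_⟩
  rintro e ⟨ω, hcard, hunit, rfl⟩
  rw [Elog]
  calc (n:ℝ)^2 * (-Real.log 2) = ∑ _p ∈ ω, ∑ _q ∈ ω, (-Real.log 2) := by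
        rw [Finset.sum_const, Finset.sum_const, hcard, nsmul_eq_mul, nsmul_eq_mul]
        ring
    _ ≤ _ := by
        refine Finset.sum_le_sum fun p hp => Finset.sum_le_sum fun q hq => ?_
        exact term_lower p q (hunit p hp) (hunit q hq)

/-- For every collection `x₁,…,x_N` of unit vectors with `x_i ≠ ±x_j` for `i ≠ j`,
the projective logarithmic energy satisfies
`E^P_log(x₁,…,x_N) ≥ (1/2)·m_{2N} + N²·log 2`. -/
theorem projective_energy_lower_bound
    (N : ℕ) (hN : 1 ≤ N) (x : Fin N → Esp) (hx : ∀ i, ‖x i‖ = 1)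
    (hdist : ∀ i j, i ≠ j → x i ≠ x j ∧ x i ≠ -x j) :
    EPlog x ≥ (1/2) * minEnergy (2*N) + (N:ℝ)^2 * Real.log 2 := by
  -- notation
  set L : Fin N → Fin N → ℝ := fun i j =>
    Real.log (1 / ‖x i - x j‖) + Real.log (1 / ‖x i + x j‖) with hL
  set S : ℝ := ∑ i, ∑ j, if i = j then 0 else L i j with hS
  have hxne : ∀ i, x i ≠ 0 := fun i => by
    intro h; have := hx i; rw [h, norm_zero] at this; norm_num at this
  have hself : ∀ i, x i ≠ -x i := by
    intro i h
    have h0 : x i + x i = 0 := eq_neg_iff_add_eq_zero.mp h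
    have h2 : (2:ℝ) • x i = 0 := by rw [two_smul]; exact h0
    rcases smul_eq_zero.mp h2 with h'|h'
    · norm_num at h'
    · exact hxne i h'
  have hsubne : ∀ i j, i ≠ j → ‖x i - x j‖ ≠ 0 := fun i j h => by
    rw [norm_ne_zero_iff, sub_ne_zero]; exact (hdist i j h).1
  have haddne : ∀ i j, ‖x i + x j‖ ≠ 0 := fun i j => by
    rw [norm_ne_zero_iff]
    intro h
    have : x i = -x j := by
      rw [eq_neg_iff_add_eq_zero]; exact h
    by_cases hij : i = j
    · subst hij; exact hself i this
    · exact (hdist i j hij).2 this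
  -- per-term identity for the projective energy
  have hterm : ∀ i j, i ≠ j →
      Real.log (Real.sqrt (1 - ⟪x i, x j⟫^2)) = -(L i j + Real.log 2) := by
    intro i j h
    rw [sqrt_inner_eq (x i) (x j) (hx i) (hx j)]
    rw [Real.log_div (mul_ne_zero (hsubne i j h) (haddne i j)) two_ne_zero,
      Real.log_mul (hsubne i j h) (haddne i j)]
    rw [hL]
    simp only [one_div, Real.log_inv]
    ring
  -- Claim A : EPlog x = S + (N² - N) log 2
  have hEP : EPlog x = S + ((N:ℝ)^2 - N) * Real.log 2 := by
    have step : (∑ i, ∑ j, if i = j then (0:ℝ)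
        else Real.log (Real.sqrt (1 - ⟪x i, x j⟫^2)))
        = -∑ i, ∑ j, (if i = j then (0:ℝ) else (L i j + Real.log 2)) := by
      rw [← Finset.sum_neg_distrib]
      refine Finset.sum_congr rfl fun i _ => ?_
      rw [← Finset.sum_neg_distrib]
      refine Finset.sum_congr rfl fun j _ => ?_
      by_cases h : i = j
      · simp [h]
      · rw [if_neg h, if_neg h]; exact hterm i j h
    rw [EPlog, step, neg_neg]
    have split : ∀ i j : Fin N, (if i = j then (0:ℝ) else (L i j + Real.log 2))
        = (if i = j then (0:ℝ) else L i j)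
          + (Real.log 2 - (if i = j then Real.log 2 else 0)) := by
      intro i j; by_cases h : i = j <;> simp [h]
    calc (∑ i, ∑ j, if i = j then (0:ℝ) else (L i j + Real.log 2))
        = ∑ i, ∑ j, ((if i = j then (0:ℝ) else L i j)
            + (Real.log 2 - (if i = j then Real.log 2 else 0))) := by
          exact Finset.sum_congr rfl fun i _ =>
            Finset.sum_congr rfl fun j _ => split i j
      _ = S + ((N:ℝ)^2 - N) * Real.log 2 := by
          simp only [Finset.sum_add_distrib, Finset.sum_sub_distrib,
            Finset.sum_const, Finset.sum_ite_eq, Finset.mem_univ, if_true,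
            Finset.card_univ, Fintype.card_fin, nsmul_eq_mul]
          rw [← hS]
          ring
  -- the symmetrized configuration
  set f : Fin N × Bool → Esp := fun p => if p.2 then x p.1 else -x p.1 with hf
  have hxinj : ∀ i j : Fin N, x i = x j → i = j := by
    intro i j h
    by_contra hij
    exact (hdist i j hij).1 h
  have hxnegne : ∀ i j : Fin N, x i ≠ -x j := by
    intro i j h
    by_cases hij : i = j
    · subst hij; exact hself i h
    · exact (hdist i j hij).2 h
  have fvt : ∀ i, f (i, true) = x i := fun i => rfl
  have fvf : ∀ i, f (i, false) = -x i := fun i => rfl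
  have hfinj : Function.Injective f := by
    rintro ⟨i, b⟩ ⟨j, c⟩ h
    cases b <;> cases c
    · have h' : x i = x j := neg_inj.mp (by simpa [fvf] using h)
      simp [hxinj i j h']
    · exfalso
      have h' : -x i = x j := by simpa [fvf, fvt] using h
      exact hxnegne j i h'.symm
    · exfalso
      have h' : x i = -x j := by simpa [fvf, fvt] using h
      exact hxnegne i j h'
    · have h' : x i = x j := by simpa [fvt] using h
      simp [hxinj i j h']
  set ω : Finset Esp := Finset.image f Finset.univ with hω
  have hcard : ω.card = 2 * N := by
    rw [hω, Finset.card_image_of_injective _ hfinj, Finset.card_univ,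
      Fintype.card_prod, Fintype.card_bool, Fintype.card_fin]
    ring
  have hunit : ∀ p ∈ ω, ‖p‖ = 1 := by
    intro p hp
    rw [hω, Finset.mem_image] at hp
    obtain ⟨⟨i, b⟩, -, rfl⟩ := hp
    cases b <;> simp [hf, hx i]
  -- Claim B : Elog ω = 2 S - 2 N log 2
  have hnorm2 : ∀ i, ‖x i + x i‖ = 2 := by
    intro i
    rw [← two_smul ℝ, norm_smul, hx i]
    simp
  have hElog : Elog ω = 2 * S - 2 * (N:ℝ) * Real.log 2 := by
    have h1 : Elog ω = ∑ p : Fin N × Bool, ∑ q : Fin N × Bool,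
        (if f p = f q then (0:ℝ) else Real.log (1 / ‖f p - f q‖)) := by
      rw [Elog, hω, Finset.sum_image (fun a _ b _ h => hfinj h)]
      exact Finset.sum_congr rfl fun p _ => Finset.sum_image (fun a _ b _ h => hfinj h)
    have h2 : ∀ i j : Fin N,
        (∑ b : Bool, ∑ c : Bool,
          (if f (i, b) = f (j, c) then (0:ℝ) else Real.log (1 / ‖f (i, b) - f (j, c)‖)))
        = if i = j then -(2 * Real.log 2) else 2 * L i j := by
      intro i j
      simp only [Fintype.sum_bool, fvt, fvf, hfinj.eq_iff, Prod.mk.injEq]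
      by_cases h : i = j
      · subst h
        rw [if_pos (by simp), if_neg (by simp), if_neg (by simp), if_pos (by simp),
          if_pos rfl]
        have e1 : x i - -x i = x i + x i := by abel
        have e2 : -x i - x i = -(x i + x i) := by abel
        rw [e1, e2, norm_neg, hnorm2 i]
        rw [one_div, Real.log_inv]
        ring
      · rw [if_neg (by simp [h]), if_neg (by simp [h]), if_neg (by simp [h]),
          if_neg (by simp [h]), if_neg h]
        have e1 : x i - -x j = x i + x j := by abel
        have e2 : -x i - x j = -(x i + x j) := by abel
        have e3 : -x i - -x j = -(x i - x j) := by abel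
        rw [e1, e2, e3, norm_neg, norm_neg, hL]
        ring
    have h3 : ∀ i : Fin N, (∑ b : Bool, ∑ q : Fin N × Bool,
        (if f (i, b) = f q then (0:ℝ) else Real.log (1 / ‖f (i, b) - f q‖)))
        = ∑ j, (if i = j then -(2 * Real.log 2) else 2 * L i j) := by
      intro i
      rw [Finset.sum_comm, Fintype.sum_prod_type]
      refine Finset.sum_congr rfl fun j _ => ?_
      rw [Finset.sum_comm]
      exact h2 i j
    have h5 : Elog ω = ∑ i, ∑ j, (if i = j then -(2 * Real.log 2) else 2 * L i j) := by
      rw [h1, Fintype.sum_prod_type]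
      exact Finset.sum_congr rfl fun i _ => h3 i
    rw [h5]
    have split : ∀ i j : Fin N,
        (if i = j then -(2 * Real.log 2) else 2 * L i j)
        = 2 * (if i = j then (0:ℝ) else L i j)
          + (if i = j then -(2 * Real.log 2) else 0) := by
      intro i j; by_cases h : i = j <;> simp [h]
    rw [Finset.sum_congr rfl fun i _ => Finset.sum_congr rfl fun j _ => split i j]
    simp only [Finset.sum_add_distrib, ← Finset.mul_sum,
      Finset.sum_ite_eq, Finset.mem_univ, if_true, Finset.sum_const,
      Finset.card_univ, Fintype.card_fin, nsmul_eq_mul]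
    rw [← hS]
    ring
  -- Claim C : minEnergy (2N) ≤ Elog ω
  have hC : minEnergy (2 * N) ≤ Elog ω := by
    apply csInf_le (bddBelow_energy (2 * N))
    exact ⟨ω, hcard, hunit, rfl⟩
  -- conclusion
  rw [ge_iff_le, hEP]
  linarith
end
end

section
/- Let a generalized-Diamond datum with parameter M ≥ 2 be given, with constant C = C_{r(x)} and total number of points N. Then M²/(2C²) ≤ N ≤ 5·C·M². -/
open scoped Real Classical

noncomputable section

/-- **Size of the generalized Diamond ensemble.** For a generalized-Diamond datum
(integers `M ≥ 2`, `n ≥ 1`, breakpoints `0 = t 0 < t 1 < ⋯ < t n = M-1 < t (n+1) = M`,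
nonnegative integers `α ℓ, β ℓ` with `β 1 > 0`, so that `r(x) = α ℓ + β ℓ x` on
`(t (ℓ-1), t ℓ]`, with `r(j) ≥ 1` for all integers `1 ≤ j ≤ M`), with its constant
`C = max_ℓ (α ℓ / M, β ℓ, M / t 1)` and total number of points
`N = 2 + (α (n+1) + β (n+1) M) + 2 ∑_{ℓ=1}^n ∑_{j=t (ℓ-1)+1}^{t ℓ} (α ℓ + β ℓ j)`,
one has `M²/(2C²) ≤ N ≤ 5 C M²`. -/
theorem diamond_size_bounds
    (M n : ℕ) (hM : 2 ≤ M) (hn : 1 ≤ n)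
    (t α β : ℕ → ℕ)
    (ht0 : t 0 = 0) (htn : t n = M - 1) (htn1 : t (n+1) = M)
    (htmono : ∀ ℓ, ℓ ≤ n → t ℓ < t (ℓ+1))
    (hβ : 0 < β 1)
    (hrpos : ∀ ℓ, 1 ≤ ℓ → ℓ ≤ n+1 → ∀ j, t (ℓ-1) < j → j ≤ t ℓ → 1 ≤ α ℓ + β ℓ * j)
    (C : ℝ)
    (hC : C = max ((Finset.Icc 1 (n+1)).sup' (Finset.nonempty_Icc.mpr (by omega))
        (fun ℓ => max ((α ℓ : ℝ) / M) (β ℓ))) ((M:ℝ) / (t 1)))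
    (N : ℕ)
    (hN : N = 2 + (α (n+1) + β (n+1) * M)
        + 2 * ∑ ℓ ∈ Finset.Icc 1 n, ∑ j ∈ Finset.Icc (t (ℓ-1) + 1) (t ℓ), (α ℓ + β ℓ * j)) :
    (M:ℝ)^2 / (2 * C^2) ≤ (N:ℝ) ∧ (N:ℝ) ≤ 5 * C * (M:ℝ)^2 := by
  have hMR : (2:ℝ) ≤ (M:ℝ) := by exact_mod_cast hM
  have hM0 : (0:ℝ) < (M:ℝ) := by linarith
  have ht1pos : 0 < t 1 := by
    have h := htmono 0 (by omega)
    simp only [Nat.zero_add] at h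
    omega
  have hmono : ∀ j, j ≤ n+1 → ∀ i, i ≤ j → t i ≤ t j := by
    intro j
    induction j with
    | zero => intro _ i hi; exact (Nat.le_zero.mp hi) ▸ le_rfl
    | succ m ih =>
      intro hm i hi
      rcases eq_or_lt_of_le hi with h | h
      · exact h ▸ le_rfl
      · exact le_trans (ih (by omega) i (by omega)) (le_of_lt (htmono m (by omega)))
  have ht1n : t 1 ≤ M - 1 := htn ▸ hmono n (by omega) 1 hn
  have ht1M : (t 1 : ℝ) ≤ (M:ℝ) := by exact_mod_cast (by omega : t 1 ≤ M)
  have ht1R : (0:ℝ) < (t 1 : ℝ) := by exact_mod_cast ht1pos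
  have hCt : (M:ℝ) / (t 1) ≤ C := hC ▸ le_max_right _ _
  have hC1 : (1:ℝ) ≤ C := le_trans (by rw [le_div_iff₀ ht1R]; linarith) hCt
  have hC0 : (0:ℝ) < C := by linarith
  have hCα : ∀ ℓ ∈ Finset.Icc 1 (n+1), (α ℓ : ℝ) ≤ C * M := by
    intro ℓ hℓ
    have h1 : (α ℓ : ℝ)/M ≤ C := by
      rw [hC]
      exact le_max_of_le_left (le_trans (le_max_left _ _)
        (Finset.le_sup' (fun ℓ => max ((α ℓ : ℝ) / M) (β ℓ)) hℓ))
    rw [div_le_iff₀ hM0] at h1; linarith [h1]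
  have hCβ : ∀ ℓ ∈ Finset.Icc 1 (n+1), (β ℓ : ℝ) ≤ C := by
    intro ℓ hℓ
    rw [hC]
    exact le_max_of_le_left (le_trans (le_max_right _ _)
      (Finset.le_sup' (fun ℓ => max ((α ℓ : ℝ) / M) (β ℓ)) hℓ))
  -- Gauss-type bound
  have gauss : ∀ k : ℕ, k^2 ≤ 2 * ∑ j ∈ Finset.Icc 1 k, j := by
    intro k
    induction k with
    | zero => simp
    | succ m ih =>
      rw [Finset.sum_Icc_succ_top (by omega)]
      have h : (m+1)^2 = m^2 + 2*m + 1 := by ring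
      omega
  -- Lower bound in ℕ
  have hNlow : (t 1)^2 ≤ N := by
    have hinner : ∑ j ∈ Finset.Icc 1 (t 1), j
        ≤ ∑ j ∈ Finset.Icc (t 0 + 1) (t 1), (α 1 + β 1 * j) := by
      rw [ht0]
      apply Finset.sum_le_sum
      intro j _
      calc j = 1 * j := (one_mul j).symm
        _ ≤ β 1 * j := Nat.mul_le_mul_right _ hβ
        _ ≤ α 1 + β 1 * j := Nat.le_add_left _ _
    have houter : ∑ j ∈ Finset.Icc (t (1-1) + 1) (t 1), (α 1 + β 1 * j)
        ≤ ∑ ℓ ∈ Finset.Icc 1 n, ∑ j ∈ Finset.Icc (t (ℓ-1) + 1) (t ℓ), (α ℓ + β ℓ * j) :=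
      Finset.single_le_sum (f := fun ℓ => ∑ j ∈ Finset.Icc (t (ℓ-1) + 1) (t ℓ), (α ℓ + β ℓ * j))
        (fun i _ => Nat.zero_le _) (Finset.mem_Icc.mpr ⟨le_rfl, hn⟩)
    have hg := gauss (t 1)
    simp only [show (1:ℕ) - 1 = 0 from rfl] at houter
    omega
  have hlow : (M:ℝ)^2 / (2 * C^2) ≤ (N:ℝ) := by
    have hMC : (M:ℝ) ≤ C * (t 1) := by rwa [div_le_iff₀ ht1R] at hCt
    have hcast : ((t 1 : ℝ))^2 ≤ (N:ℝ) := by exact_mod_cast hNlow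
    rw [div_le_iff₀ (by positivity)]
    nlinarith [mul_le_mul hMC hMC hM0.le (by positivity : (0:ℝ) ≤ C * (t 1)),
      mul_le_mul_of_nonneg_left hcast (sq_nonneg C)]
  refine ⟨hlow, ?_⟩
  -- Upper bound
  have hNR : (N:ℝ) = 2 + ((α (n+1) : ℝ) + (β (n+1) : ℝ) * M)
      + 2 * ∑ ℓ ∈ Finset.Icc 1 n, ∑ j ∈ Finset.Icc (t (ℓ-1) + 1) (t ℓ),
        ((α ℓ : ℝ) + (β ℓ : ℝ) * j) := by
    rw [hN]; push_cast; ring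
  have hterm : ∀ ℓ ∈ Finset.Icc 1 n,
      ∑ j ∈ Finset.Icc (t (ℓ-1) + 1) (t ℓ), ((α ℓ : ℝ) + (β ℓ : ℝ) * j)
        ≤ ((t ℓ - t (ℓ-1) : ℕ) : ℝ) * (2*C*M) := by
    intro ℓ hℓ
    obtain ⟨h1, h2⟩ := Finset.mem_Icc.mp hℓ
    have hℓ' : ℓ ∈ Finset.Icc 1 (n+1) := Finset.mem_Icc.mpr ⟨h1, by omega⟩
    have hαℓ := hCα ℓ hℓ'
    have hβℓ := hCβ ℓ hℓ'
    have htℓM : (t ℓ : ℝ) ≤ (M:ℝ) := by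
      have h3 : t ℓ ≤ t n := hmono n (by omega) ℓ h2
      exact_mod_cast (by omega : t ℓ ≤ M)
    have hle : t (ℓ-1) ≤ t ℓ := hmono ℓ (by omega) (ℓ-1) (by omega)
    calc ∑ j ∈ Finset.Icc (t (ℓ-1) + 1) (t ℓ), ((α ℓ : ℝ) + (β ℓ : ℝ) * j)
        ≤ ∑ _j ∈ Finset.Icc (t (ℓ-1) + 1) (t ℓ), (2*C*M) := by
          apply Finset.sum_le_sum
          intro j hj
          obtain ⟨hj1, hj2⟩ := Finset.mem_Icc.mp hj
          have hjM : (j:ℝ) ≤ (M:ℝ) := le_trans (by exact_mod_cast hj2) htℓM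
          have hβj : (β ℓ : ℝ) * j ≤ C * M :=
            mul_le_mul hβℓ hjM (by positivity) hC0.le
          linarith
      _ = ((Finset.Icc (t (ℓ-1) + 1) (t ℓ)).card : ℝ) * (2*C*M) := by
          rw [Finset.sum_const, nsmul_eq_mul]
      _ = ((t ℓ - t (ℓ-1) : ℕ) : ℝ) * (2*C*M) := by
          rw [Nat.card_Icc]
          congr 2
          omega
  have hcount : ∀ m, m ≤ n → ∑ ℓ ∈ Finset.Icc 1 m, (t ℓ - t (ℓ-1)) = t m - t 0 := by
    intro m
    induction m with
    | zero => intro _; simp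
    | succ k ih =>
      intro h
      rw [Finset.sum_Icc_succ_top (by omega), ih (by omega)]
      have h1 : t 0 ≤ t k := hmono k (by omega) 0 (by omega)
      have h2 : t k ≤ t (k+1) := hmono (k+1) (by omega) k (by omega)
      have h3 : (k+1) - 1 = k := by omega
      rw [h3]
      omega
  have hsum : ∑ ℓ ∈ Finset.Icc 1 n, ∑ j ∈ Finset.Icc (t (ℓ-1) + 1) (t ℓ),
      ((α ℓ : ℝ) + (β ℓ : ℝ) * j) ≤ ((M:ℝ) - 1) * (2*C*M) := by
    calc ∑ ℓ ∈ Finset.Icc 1 n, ∑ j ∈ Finset.Icc (t (ℓ-1) + 1) (t ℓ),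
        ((α ℓ : ℝ) + (β ℓ : ℝ) * j)
        ≤ ∑ ℓ ∈ Finset.Icc 1 n, ((t ℓ - t (ℓ-1) : ℕ) : ℝ) * (2*C*M) :=
          Finset.sum_le_sum hterm
      _ = ((∑ ℓ ∈ Finset.Icc 1 n, (t ℓ - t (ℓ-1)) : ℕ) : ℝ) * (2*C*M) := by
          rw [Nat.cast_sum, Finset.sum_mul]
      _ = ((M:ℝ) - 1) * (2*C*M) := by
          rw [hcount n le_rfl, ht0, htn]
          have : M - 1 - 0 = M - 1 := by omega
          rw [this, Nat.cast_sub (by omega)]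
          norm_num
  have hα1 := hCα (n+1) (Finset.mem_Icc.mpr ⟨by omega, le_rfl⟩)
  have hβ1 := hCβ (n+1) (Finset.mem_Icc.mpr ⟨by omega, le_rfl⟩)
  have hβM : (β (n+1) : ℝ) * M ≤ C * M := mul_le_mul_of_nonneg_right hβ1 hM0.le
  rw [hNR]
  nlinarith [hsum, hα1, hβM, hC1, hMR, hC0, hM0,
    mul_le_mul hC1 (by nlinarith : (4:ℝ) ≤ M^2) (by norm_num) hC0.le]
end
end

section
/- For every integer N ≥ 241 there exist integers m ≥ 1, γ with 0 ≤ γ ≤ 800, ε ∈ {−1, 0, 1}, and d with 6m ≤ d ≤ 7m−1, such that N = 239·m² + 2 + (2m−1)·γ + 2·(7m−1−d) + 1 + ε. -/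
/-- **Counting identity for the quasioptimal generalized Diamond ensemble.**
Every integer `N ≥ 241` can be written as
`N = 239 m² + 2 + (2m-1) γ + 2 (7m-1-d) + 1 + ε`
with integers `m ≥ 1`, `0 ≤ γ ≤ 800`, `ε ∈ {-1,0,1}` and `6m ≤ d ≤ 7m-1`. -/
theorem quasioptimal_diamond_counting (N : ℕ) (hN : 241 ≤ N) :
    ∃ m γ d ε : ℤ, 1 ≤ m ∧ 0 ≤ γ ∧ γ ≤ 800 ∧ (ε = -1 ∨ ε = 0 ∨ ε = 1) ∧
      6*m ≤ d ∧ d ≤ 7*m - 1 ∧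
      (N : ℤ) = 239*m^2 + 2 + (2*m - 1)*γ + 2*(7*m - 1 - d) + 1 + ε := by
  -- choose m as the largest integer with 239 m² + 2 ≤ N
  set mn : ℕ := Nat.sqrt ((N - 2) / 239) with hmn
  have hdiv1 : 1 ≤ (N - 2) / 239 := (Nat.le_div_iff_mul_le (by norm_num)).mpr (by omega)
  have hm1 : 1 ≤ mn := by
    have := Nat.sqrt_le_sqrt hdiv1
    simpa [hmn] using this
  have hlowN : 239 * (mn * mn) + 2 ≤ N := by
    have h1 : mn * mn ≤ (N - 2) / 239 := by
      have := Nat.sqrt_le' ((N - 2) / 239)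
      simpa [pow_two, hmn] using this
    have h2 : 239 * (mn * mn) ≤ 239 * ((N - 2) / 239) := Nat.mul_le_mul_left _ h1
    have h3 : 239 * ((N - 2) / 239) ≤ N - 2 := Nat.mul_div_le _ _
    omega
  have huppN : N - 2 < 239 * ((mn + 1) * (mn + 1)) := by
    have h1 : (N - 2) / 239 < (mn + 1) * (mn + 1) := by
      have := Nat.lt_succ_sqrt' ((N - 2) / 239)
      simpa [pow_two, hmn, Nat.succ_eq_add_one] using this
    have := (Nat.div_lt_iff_lt_mul (by norm_num : 0 < 239)).mp h1
    omega
  set m : ℤ := (mn : ℤ) with hmdef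
  have hm : 1 ≤ m := by rw [hmdef]; exact_mod_cast hm1
  have hL : 239 * m ^ 2 + 2 ≤ (N : ℤ) := by
    have := hlowN
    push_cast [hmdef]
    nlinarith [hlowN, (Nat.cast_le (α := ℤ)).mpr hlowN]
  have hU : (N : ℤ) ≤ 239 * m ^ 2 + 478 * m + 240 := by
    have h2 : (N : ℤ) - 2 < 239 * ((m + 1) * (m + 1)) := by
      have h3 : ((N - 2 : ℕ) : ℤ) < ((239 * ((mn + 1) * (mn + 1)) : ℕ) : ℤ) := by
        exact_mod_cast huppN
      have h4 : ((N - 2 : ℕ) : ℤ) = (N : ℤ) - 2 := by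
        have : 2 ≤ N := by omega
        omega
      push_cast at h3
      linarith [h3, h4.symm.le, h4.le]
    nlinarith [h2]
  set R : ℤ := (N : ℤ) - 239 * m ^ 2 - 2 with hRdef
  have hR0 : 0 ≤ R := by simp [hRdef]; linarith
  have hRU : R ≤ 1602 * m - 800 := by
    have : R ≤ 478 * m + 238 := by simp [hRdef]; linarith
    linarith
  have hpos : (0 : ℤ) < 2 * m - 1 := by linarith
  set γ0 : ℤ := R / (2 * m - 1) with hγ0
  set γ : ℤ := min γ0 800 with hγdef
  set r : ℤ := R - (2 * m - 1) * γ with hrdef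
  have hγnn : 0 ≤ γ := by
    have : 0 ≤ γ0 := Int.ediv_nonneg hR0 (le_of_lt hpos)
    simp [hγdef]; omega
  have hγ800 : γ ≤ 800 := min_le_right _ _
  have hREq : R = (2 * m - 1) * γ + r := by rw [hrdef]; ring
  have hr0 : 0 ≤ r := by
    rcases le_or_gt γ0 800 with h | h
    · have hγeq : γ = γ0 := min_eq_left h
      have := Int.emod_nonneg R (ne_of_gt hpos)
      rw [Int.emod_def] at this
      simpa [hrdef, hγeq, hγ0, mul_comm] using this
    · have hγeq : γ = 800 := min_eq_right (le_of_lt h)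
      have h801 : 801 ≤ γ0 := h
      have hge : (2 * m - 1) * γ0 ≤ R := by
        rw [hγ0, mul_comm]; exact Int.ediv_mul_le R (ne_of_gt hpos)
      have : (2 * m - 1) * 800 ≤ (2 * m - 1) * γ0 := by
        apply mul_le_mul_of_nonneg_left (by linarith) (le_of_lt hpos)
      simp only [hrdef, hγeq]
      linarith
  have hr2m : r ≤ 2 * m := by
    rcases le_or_gt γ0 800 with h | h
    · have hγeq : γ = γ0 := min_eq_left h
      have hlt := Int.emod_lt_of_pos R hpos
      rw [Int.emod_def] at hlt
      have : r < 2 * m - 1 := by simpa [hrdef, hγeq, hγ0, mul_comm] using hlt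
      linarith
    · have hγeq : γ = 800 := min_eq_right (le_of_lt h)
      simp only [hrdef, hγeq]
      linarith
  -- split on parity of r
  rcases Int.even_or_odd r with ⟨k, hk⟩ | ⟨k, hk⟩
  · -- r = 2k
    have hk0 : 0 ≤ k := by omega
    rcases eq_or_lt_of_le (by omega : k ≤ m) with hkm | hkm
    · -- k = m : take d = 6m, ε = 1
      refine ⟨m, γ, 6 * m, 1, hm, hγnn, hγ800, Or.inr (Or.inr rfl), le_refl _, by linarith, ?_⟩
      have hN' : (N : ℤ) = 239 * m ^ 2 + 2 + R := by rw [hRdef]; ring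
      rw [hN', hREq, hk, hkm]; ring
    · -- k ≤ m - 1 : take d = 7m - 1 - k, ε = -1
      refine ⟨m, γ, 7 * m - 1 - k, -1, hm, hγnn, hγ800, Or.inl rfl, by omega, by omega, ?_⟩
      have hN' : (N : ℤ) = 239 * m ^ 2 + 2 + R := by rw [hRdef]; ring
      rw [hN', hREq, hk]; ring
  · -- r = 2k + 1 : take d = 7m - 1 - k, ε = 0
    have hk0 : 0 ≤ k := by omega
    have hkm : k ≤ m - 1 := by omega
    refine ⟨m, γ, 7 * m - 1 - k, 0, hm, hγnn, hγ800, Or.inr (Or.inl rfl), by omega, by omega, ?_⟩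
    have hN' : (N : ℤ) = 239 * m ^ 2 + 2 + R := by rw [hRdef]; ring
    rw [hN', hREq, hk]; ring
end

section
/- For every A ≥ 1 there exists a constant Υ > 0 with the following property. Let M ≥ 2 and let r_1,…,r_M be positive integers with j/A ≤ r_j ≤ A·j for all 1 ≤ j ≤ M. Set D = 1 + 2·Σ_{k=1}^{M−1} r_k + r_M and z_j = 1 − (1 + r_j + 2·Σ_{k=1}^{j−1} r_k)/D for 1 ≤ j ≤ M. Then |Σ_{j=1}^{M−1} r_j·log(1 − ((z_j−1)/(z_j+1))^{r_j})| ≤ Υ·M. -/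
private lemma geom_bound (q : ℝ) (h0 : 0 ≤ q) (h1 : q < 1) (n : ℕ) :
    ∑ i ∈ Finset.range n, q ^ i ≤ 1 / (1 - q) := by
  have h2 : (0:ℝ) < 1 - q := by linarith
  calc ∑ i ∈ Finset.range n, q ^ i = (q ^ n - 1) / (q - 1) := geom_sum_eq (by linarith) n
    _ = (1 - q ^ n) / (1 - q) := by rw [← neg_div_neg_eq]; ring_nf
    _ ≤ 1 / (1 - q) := by
        apply div_le_div₀ (by norm_num) _ h2 le_rfl
        have := pow_nonneg h0 n; linarith

private lemma gauss_sum (n : ℕ) (hn : 1 ≤ n) :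
    ∑ i ∈ Finset.range n, (i : ℝ) = (n : ℝ) * ((n : ℝ) - 1) / 2 := by
  have h := Finset.sum_range_id_mul_two n
  have hc : ((∑ i ∈ Finset.range n, i : ℕ) : ℝ) * 2 = (n : ℝ) * ((n : ℝ) - 1) := by
    calc ((∑ i ∈ Finset.range n, i : ℕ) : ℝ) * 2 = ((((∑ i ∈ Finset.range n, i) * 2 : ℕ)) : ℝ) := by
          push_cast; ring
      _ = (((n * (n - 1) : ℕ)) : ℝ) := by rw [h]
      _ = (n : ℝ) * ((n : ℝ) - 1) := by rw [Nat.cast_mul, Nat.cast_sub hn, Nat.cast_one]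
  rw [Nat.cast_sum] at hc
  linarith

private lemma min_ineq (A x m : ℝ) (hA : 1 ≤ A) (hx1 : 1 ≤ x) (hxm : x ≤ m - 1) (hm : 2 ≤ m) :
    (1/(4*A^3)) * min x (m - x) ≤ x/A * ((m^2 - x^2)/(2*A^2*m^2)) := by
  have hA0 : 0 < A := by linarith
  have hm0 : 0 < m := by linarith
  have key : min x (m-x) * m^2 ≤ 2 * (x * (m^2 - x^2)) := by
    rcases le_total x (m - x) with h | h
    · rw [min_eq_left h]
      have h1 : 0 ≤ m^2 - 2*x^2 := by nlinarith
      nlinarith [mul_nonneg (le_trans zero_le_one hx1) h1]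
    · rw [min_eq_right h]
      have h2 : m^2 ≤ 2*x*(m+x) := by nlinarith
      have h3 : (0:ℝ) ≤ m - x := by linarith
      nlinarith [mul_le_mul_of_nonneg_left h2 h3]
  rw [div_mul_div_comm, one_div_mul_eq_div,
    div_le_div_iff₀ (by positivity) (by positivity)]
  nlinarith [mul_le_mul_of_nonneg_left key (show (0:ℝ) ≤ 2*A^3 by positivity)]

private lemma log_term_bound (t s : ℝ) (n : ℕ) (ht0 : 0 ≤ t) (hs : 0 < s)
    (hsn : s ≤ (n : ℝ) * (1 - t)) :
    |Real.log (1 - (-t)^n)| ≤ (1 + 1/s) * Real.exp (-s) := by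
  set E := Real.exp (-s) with hE
  have hE0 : 0 < E := Real.exp_pos _
  have hE1 : E < 1 := by rw [hE, Real.exp_lt_one_iff]; linarith
  have hu : t ^ n ≤ E := by
    calc t ^ n ≤ (Real.exp (t - 1)) ^ n :=
          pow_le_pow_left₀ ht0 (by linarith [Real.add_one_le_exp (t-1)]) n
      _ = Real.exp ((n : ℝ) * (t - 1)) := (Real.exp_nat_mul _ n).symm
      _ ≤ E := Real.exp_le_exp.mpr (by nlinarith)
  have hun : 0 ≤ t ^ n := pow_nonneg ht0 n
  have habs : |(-t) ^ n| = t ^ n := by rw [abs_pow, abs_neg, abs_of_nonneg ht0]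
  have h1 : (-t) ^ n ≤ t ^ n := habs ▸ le_abs_self _
  have h2 : -(t ^ n) ≤ (-t) ^ n := habs ▸ neg_abs_le _
  have hu1 : t ^ n < 1 := lt_of_le_of_lt hu hE1
  have hne : 0 < 1 - (-t) ^ n := by linarith
  have hlow : 0 < 1 - t ^ n := by linarith
  have hs1 : 0 < 1 + s := by linarith
  have hsE : s / (1 + s) ≤ 1 - E := by
    have h3 := Real.add_one_le_exp s
    have h4 : E ≤ 1 / (1 + s) := by
      rw [hE, Real.exp_neg, one_div]
      exact inv_anti₀ hs1 (by linarith)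
    have h5 : s / (1 + s) = 1 - 1 / (1 + s) := by field_simp; ring
    rw [h5]; linarith
  have hsE0 : 0 < s / (1 + s) := by positivity
  -- upper bound
  have hub : Real.log (1 - (-t) ^ n) ≤ (1 + 1/s) * E := by
    have h6 := Real.log_le_sub_one_of_pos hne
    have h7 : (0:ℝ) < 1/s := by positivity
    nlinarith
  -- lower bound
  have hlog1 : Real.log ((1 - t ^ n)⁻¹) ≤ (1 - t ^ n)⁻¹ - 1 :=
    Real.log_le_sub_one_of_pos (inv_pos.mpr hlow)
  rw [Real.log_inv] at hlog1
  have hfrac : (1 - t ^ n)⁻¹ - 1 = t ^ n / (1 - t ^ n) := by field_simp; ring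
  have hdiv : t ^ n / (1 - t ^ n) ≤ E / (s / (1 + s)) := by
    apply div_le_div₀ (le_of_lt hE0) hu hsE0
    linarith
  have hES : E / (s / (1 + s)) = (1 + 1/s) * E := by
    field_simp; ring
  have hmono : Real.log (1 - t ^ n) ≤ Real.log (1 - (-t) ^ n) :=
    Real.log_le_log hlow (by linarith)
  rw [abs_le]
  constructor
  · rw [hfrac] at hlog1
    rw [hES] at hdiv
    linarith
  · exact hub

set_option maxHeartbeats 2000000 in
/-- **Bound on the antipodal correction term** (Lemma 4.3 of the paper). For every
`A ≥ 1` there is `Υ > 0` such that, whenever `M ≥ 2`, `r_1,…,r_M` are positive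
integers with `j/A ≤ r_j ≤ A j`, `D = 1 + 2 ∑_{k=1}^{M-1} r_k + r_M` and
`z_j = 1 - (1 + r_j + 2 ∑_{k<j} r_k)/D`, we have
`|∑_{j=1}^{M-1} r_j log (1 - ((z_j-1)/(z_j+1))^{r_j})| ≤ Υ M`. -/
theorem antipodal_correction_bound :
    ∀ A : ℝ, 1 ≤ A → ∃ Υ : ℝ, 0 < Υ ∧
    ∀ M : ℕ, 2 ≤ M →
    ∀ r : ℕ → ℕ,
    (∀ j, 1 ≤ j → j ≤ M → 1 ≤ r j) →
    (∀ j, 1 ≤ j → j ≤ M → (j : ℝ) / A ≤ (r j : ℝ) ∧ (r j : ℝ) ≤ A * j) →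
    ∀ D : ℝ, D = 1 + 2 * (∑ k ∈ Finset.Icc 1 (M-1), (r k : ℝ)) + (r M : ℝ) →
    ∀ z : ℕ → ℝ,
    (∀ j, 1 ≤ j → j ≤ M →
      z j = 1 - (1 + (r j : ℝ) + 2 * ∑ k ∈ Finset.Ico 1 j, (r k : ℝ)) / D) →
    |∑ j ∈ Finset.Icc 1 (M-1), (r j : ℝ) * Real.log (1 - ((z j - 1)/(z j + 1))^(r j))|
      ≤ Υ * M := by
  intro A hA
  have hA0 : (0:ℝ) < A := by linarith
  set B : ℝ := 4 * A^3 with hBdef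
  have hB0 : 0 < B := by positivity
  have hB1 : 1 ≤ B := by
    have h3 : (1:ℝ) ≤ A^3 := one_le_pow₀ hA
    linarith
  set c : ℝ := 1 / B with hcdef
  have hc0 : 0 < c := by positivity
  set q : ℝ := Real.exp (-c) with hqdef
  have hq0 : 0 ≤ q := (Real.exp_pos _).le
  have hq1 : q < 1 := by rw [hqdef, Real.exp_lt_one_iff]; linarith
  have hq2 : 0 < 1 - q := by linarith
  refine ⟨2 * A * (1 + B) * (1 / (1 - q)), by positivity, ?_⟩
  intro M hM r hr1 hrA D hD z hz
  have hM1 : 1 ≤ M := by omega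
  have hMR : (2:ℝ) ≤ (M:ℝ) := by exact_mod_cast hM
  have hMR0 : (0:ℝ) < (M:ℝ) := by linarith
  have hIccIco : Finset.Icc 1 (M-1) = Finset.Ico 1 M := by
    rw [← Finset.Ico_add_one_right_eq_Icc]; congr 1; omega
  -- rewrite D using Ico 1 M
  have hD' : D = 1 + 2 * (∑ k ∈ Finset.Ico 1 M, (r k : ℝ)) + (r M : ℝ) := by
    rw [hD, hIccIco]
  have hsum_nonneg : ∀ (s : Finset ℕ), 0 ≤ ∑ k ∈ s, (r k : ℝ) :=
    fun s => Finset.sum_nonneg (fun k _ => by positivity)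
  have hDpos : 0 < D := by
    have := hsum_nonneg (Finset.Ico 1 M)
    have : (0:ℝ) ≤ (r M : ℝ) := by positivity
    rw [hD']
    have := hsum_nonneg (Finset.Ico 1 M)
    positivity
  -- Gauss sums
  have hgaussM : ∑ k ∈ Finset.Ico 1 M, (k : ℝ) = (M:ℝ) * ((M:ℝ) - 1) / 2 := by
    rw [Finset.sum_Ico_eq_sub _ hM1, gauss_sum M hM1]
    simp
  -- upper bound on D
  have hDub : D ≤ 2 * A * (M:ℝ)^2 := by
    have h1 : ∑ k ∈ Finset.Ico 1 M, (r k : ℝ) ≤ ∑ k ∈ Finset.Ico 1 M, A * (k:ℝ) := by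
      apply Finset.sum_le_sum
      intro k hk
      rw [Finset.mem_Ico] at hk
      exact (hrA k hk.1 (by omega)).2
    rw [← Finset.mul_sum, hgaussM] at h1
    have h2 : (r M : ℝ) ≤ A * M := (hrA M hM1 le_rfl).2
    have hM2 : (4:ℝ) ≤ (M:ℝ)^2 := by nlinarith [hMR]
    have h3 : A * ((M:ℝ) * ((M:ℝ) - 1) / 2) * 2 + A * (M:ℝ) = A * (M:ℝ)^2 := by ring
    have h4 : (1:ℝ) ≤ A * (M:ℝ)^2 := by nlinarith [hMR, hA]
    rw [hD']
    linarith
  -- per-term bound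
  have hterm : ∀ j ∈ Finset.Icc 1 (M-1),
      (r j : ℝ) * |Real.log (1 - ((z j - 1)/(z j + 1))^(r j))| ≤
        (A * M) * ((1 + B) * (Real.exp (-(c * j)) + Real.exp (-(c * ((M:ℝ) - j))))) := by
    intro j hj
    rw [Finset.mem_Icc] at hj
    obtain ⟨hj1, hjM1⟩ := hj
    have hjM : j < M := by omega
    have hjM' : j ≤ M := by omega
    have hj1R : (1:ℝ) ≤ (j:ℝ) := by exact_mod_cast hj1
    have hjMR : (j:ℝ) ≤ (M:ℝ) - 1 := by
      have : (j:ℝ) + 1 ≤ (M:ℝ) := by exact_mod_cast hjM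
      linarith
    set C : ℝ := 1 + (r j : ℝ) + 2 * ∑ k ∈ Finset.Ico 1 j, (r k : ℝ) with hCdef
    have hzj : z j = 1 - C / D := hz j hj1 hjM'
    -- split the sum
    have hsplit : ∑ k ∈ Finset.Ico 1 M, (r k : ℝ) =
        (∑ k ∈ Finset.Ico 1 j, (r k : ℝ)) + (r j : ℝ) + ∑ k ∈ Finset.Ico (j+1) M, (r k : ℝ) := by
      rw [← Finset.sum_Ico_consecutive _ hj1 hjM',
        Finset.sum_eq_sum_Ico_succ_bot hjM]
      ring
    have hDC : D - C = (r j : ℝ) + 2 * (∑ k ∈ Finset.Ico (j+1) M, (r k : ℝ)) + (r M : ℝ) := by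
      rw [hD', hCdef, hsplit]; ring
    -- lower bound on the tail sum
    have hgaussj : ∑ k ∈ Finset.Ico (j+1) M, (k : ℝ) =
        (M:ℝ) * ((M:ℝ) - 1) / 2 - ((j:ℝ)+1) * (j:ℝ) / 2 := by
      rw [Finset.sum_Ico_eq_sub _ (by omega : j + 1 ≤ M), gauss_sum M hM1,
        gauss_sum (j+1) (by omega)]
      push_cast; ring
    have htail : ((M:ℝ) * ((M:ℝ) - 1) / 2 - ((j:ℝ)+1) * (j:ℝ) / 2) / A ≤
        ∑ k ∈ Finset.Ico (j+1) M, (r k : ℝ) := by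
      rw [← hgaussj, Finset.sum_div]
      apply Finset.sum_le_sum
      intro k hk
      rw [Finset.mem_Ico] at hk
      exact (hrA k (by omega) (by omega)).1
    have hrjlb := (hrA j hj1 hjM').1
    have hrMlb := (hrA M hM1 le_rfl).1
    have hDClb : ((M:ℝ)^2 - (j:ℝ)^2) / A ≤ D - C := by
      rw [hDC]
      have heq : ((M:ℝ)^2 - (j:ℝ)^2) / A = (j:ℝ)/A +
          2 * (((M:ℝ) * ((M:ℝ) - 1) / 2 - ((j:ℝ)+1) * (j:ℝ) / 2) / A) + (M:ℝ)/A := by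
        field_simp; ring
      rw [heq]
      linarith
    have hCpos : 0 < C := by
      have := hsum_nonneg (Finset.Ico 1 j)
      rw [hCdef]; positivity
    have hM2j2 : 0 < (M:ℝ)^2 - (j:ℝ)^2 := by
      have hjltM : (j:ℝ) < (M:ℝ) := by linarith
      have := pow_lt_pow_left₀ hjltM (by positivity : (0:ℝ) ≤ (j:ℝ)) (by norm_num : 2 ≠ 0)
      linarith
    have hCD : C < D := by
      have : 0 < ((M:ℝ)^2 - (j:ℝ)^2) / A := by positivity
      linarith
    set t : ℝ := C / (2 * D - C) with htdef
    have h2DC : 0 < 2 * D - C := by linarith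
    have ht0 : 0 ≤ t := le_of_lt (div_pos hCpos h2DC)
    have ht1 : t < 1 := by rw [htdef, div_lt_one h2DC]; linarith
    have hD0 : D ≠ 0 := ne_of_gt hDpos
    have h2DC0 : 2 * D - C ≠ 0 := ne_of_gt h2DC
    have hz1 : z j - 1 = -(C / D) := by rw [hzj]; ring
    have hz2 : z j + 1 = (2 * D - C) / D := by
      rw [hzj]
      field_simp
      ring
    have hqeq : (z j - 1) / (z j + 1) = -t := by
      rw [hz1, hz2, htdef]
      field_simp

    set s : ℝ := (r j : ℝ) * (1 - t) with hsdef
    -- lower bounds for s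
    have h1t : (D - C) / D ≤ 1 - t := by
      have heq2 : 1 - t = (2*D - 2*C) / (2*D - C) := by
        rw [htdef]; field_simp; ring
      rw [heq2, div_le_div_iff₀ hDpos h2DC]
      have key : 0 ≤ C * (D - C) := mul_nonneg hCpos.le (by linarith)
      nlinarith [key]
    have h5 : ((M:ℝ)^2 - (j:ℝ)^2) / A / (2 * A * (M:ℝ)^2) ≤ (D - C) / D :=
      div_le_div₀ (by linarith) hDClb hDpos hDub
    have h6 : ((M:ℝ)^2 - (j:ℝ)^2) / A / (2 * A * (M:ℝ)^2)
        = ((M:ℝ)^2 - (j:ℝ)^2) / (2 * A^2 * (M:ℝ)^2) := by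
      rw [div_div]; congr 1; ring
    have hPle : ((M:ℝ)^2 - (j:ℝ)^2) / (2 * A^2 * (M:ℝ)^2) ≤ 1 - t := by
      rw [← h6]; linarith
    have hPnn : 0 ≤ ((M:ℝ)^2 - (j:ℝ)^2) / (2 * A^2 * (M:ℝ)^2) := by positivity
    have hs_lb1 : (j:ℝ)/A * (((M:ℝ)^2 - (j:ℝ)^2) / (2 * A^2 * (M:ℝ)^2)) ≤ s := by
      rw [hsdef]
      apply mul_le_mul hrjlb hPle hPnn (by positivity)
    have hmin := min_ineq A (j:ℝ) (M:ℝ) hA hj1R hjMR hMR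
    have hs_min : c * min (j:ℝ) ((M:ℝ) - j) ≤ s := by
      have : c * min (j:ℝ) ((M:ℝ) - j) = (1/(4*A^3)) * min (j:ℝ) ((M:ℝ) - j) := by
        rw [hcdef, hBdef]
      rw [this]
      exact le_trans hmin hs_lb1
    have hmin1 : (1:ℝ) ≤ min (j:ℝ) ((M:ℝ) - j) := le_min hj1R (by linarith)
    have hsc : c ≤ s := by
      have h9 : c * 1 ≤ c * min (j:ℝ) ((M:ℝ) - j) :=
        mul_le_mul_of_nonneg_left hmin1 hc0.le
      rw [mul_one] at h9
      linarith
    have hs0 : 0 < s := lt_of_lt_of_le hc0 hsc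
    -- apply the scalar lemma
    have hlog := log_term_bound t s (r j) ht0 hs0 (le_of_eq hsdef)
    rw [hqeq]
    -- assemble
    have hrjub : (r j : ℝ) ≤ A * M := by
      have h10 := (hrA j hj1 hjM').2
      have h11 : A * (j:ℝ) ≤ A * (M:ℝ) :=
        mul_le_mul_of_nonneg_left (by linarith) hA0.le
      linarith
    have h1s : 1 + 1/s ≤ 1 + B := by
      have := one_div_le_one_div_of_le hc0 hsc
      have hcB : 1 / c = B := by rw [hcdef, one_div_one_div]
      linarith [hcB ▸ this]
    have hexp_min : Real.exp (-s) ≤ Real.exp (-(c * j)) + Real.exp (-(c * ((M:ℝ) - j))) := by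
      rcases le_total (j:ℝ) ((M:ℝ) - j) with h | h
      · have : Real.exp (-s) ≤ Real.exp (-(c * j)) := by
          apply Real.exp_le_exp.mpr
          rw [min_eq_left h] at hs_min
          linarith
        linarith [Real.exp_pos (-(c * ((M:ℝ) - j)))]
      · have : Real.exp (-s) ≤ Real.exp (-(c * ((M:ℝ) - j))) := by
          apply Real.exp_le_exp.mpr
          rw [min_eq_right h] at hs_min
          linarith
        linarith [Real.exp_pos (-(c * j))]
    have hlog2 : |Real.log (1 - (-t) ^ r j)| ≤ (1 + B) * (Real.exp (-(c * j)) + Real.exp (-(c * ((M:ℝ) - j)))) := by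
      calc |Real.log (1 - (-t) ^ r j)| ≤ (1 + 1/s) * Real.exp (-s) := hlog
        _ ≤ (1 + B) * Real.exp (-s) :=
            mul_le_mul_of_nonneg_right h1s (Real.exp_pos _).le
        _ ≤ (1 + B) * (Real.exp (-(c * j)) + Real.exp (-(c * ((M:ℝ) - j)))) :=
            mul_le_mul_of_nonneg_left hexp_min (by linarith)
    exact mul_le_mul hrjub hlog2 (abs_nonneg _) (by positivity)
  -- sum the bounds
  have habs : |∑ j ∈ Finset.Icc 1 (M-1), (r j : ℝ) * Real.log (1 - ((z j - 1)/(z j + 1))^(r j))|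
      ≤ ∑ j ∈ Finset.Icc 1 (M-1),
        (A * M) * ((1 + B) * (Real.exp (-(c * j)) + Real.exp (-(c * ((M:ℝ) - j))))) := by
    calc |∑ j ∈ Finset.Icc 1 (M-1), (r j : ℝ) * Real.log (1 - ((z j - 1)/(z j + 1))^(r j))|
        ≤ ∑ j ∈ Finset.Icc 1 (M-1), |(r j : ℝ) * Real.log (1 - ((z j - 1)/(z j + 1))^(r j))| :=
          Finset.abs_sum_le_sum_abs _ _
      _ = ∑ j ∈ Finset.Icc 1 (M-1), (r j : ℝ) * |Real.log (1 - ((z j - 1)/(z j + 1))^(r j))| := by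
          apply Finset.sum_congr rfl
          intro j _
          rw [abs_mul, abs_of_nonneg (by positivity : (0:ℝ) ≤ (r j : ℝ))]
      _ ≤ ∑ j ∈ Finset.Icc 1 (M-1),
        (A * M) * ((1 + B) * (Real.exp (-(c * j)) + Real.exp (-(c * ((M:ℝ) - j))))) :=
          Finset.sum_le_sum hterm
  -- geometric bounds
  have hgeom1 : ∑ j ∈ Finset.Icc 1 (M-1), Real.exp (-(c * j)) ≤ 1 / (1 - q) := by
    have hqpow : ∀ j : ℕ, Real.exp (-(c * j)) = q ^ j := by
      intro j
      rw [hqdef, ← Real.exp_nat_mul]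
      congr 1; ring
    calc ∑ j ∈ Finset.Icc 1 (M-1), Real.exp (-(c * j))
        = ∑ j ∈ Finset.Icc 1 (M-1), q ^ j := by
          exact Finset.sum_congr rfl (fun j _ => hqpow j)
      _ ≤ ∑ j ∈ Finset.range M, q ^ j := by
          apply Finset.sum_le_sum_of_subset_of_nonneg
          · intro x hx
            rw [Finset.mem_Icc] at hx
            rw [Finset.mem_range]
            omega
          · intro i _ _
            positivity
      _ ≤ 1 / (1 - q) := geom_bound q hq0 hq1 M
  have hgeom2 : ∑ j ∈ Finset.Icc 1 (M-1), Real.exp (-(c * ((M:ℝ) - j))) ≤ 1 / (1 - q) := by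
    have hrefl : ∑ j ∈ Finset.Icc 1 (M-1), Real.exp (-(c * ((M:ℝ) - j)))
        = ∑ j ∈ Finset.Icc 1 (M-1), Real.exp (-(c * j)) := by
      apply Finset.sum_nbij' (fun a => M - a) (fun a => M - a)
      · intro a ha
        rw [Finset.mem_Icc] at ha ⊢
        omega
      · intro a ha
        rw [Finset.mem_Icc] at ha ⊢
        omega
      · intro a ha
        rw [Finset.mem_Icc] at ha
        omega
      · intro a ha
        rw [Finset.mem_Icc] at ha
        omega
      · intro a ha
        rw [Finset.mem_Icc] at ha
        congr 1
        rw [Nat.cast_sub (by omega : a ≤ M)]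
    rw [hrefl]
    exact hgeom1
  -- put everything together
  have hfinal : ∑ j ∈ Finset.Icc 1 (M-1),
      (A * M) * ((1 + B) * (Real.exp (-(c * j)) + Real.exp (-(c * ((M:ℝ) - j)))))
      ≤ 2 * A * (1 + B) * (1 / (1 - q)) * M := by
    rw [← Finset.mul_sum]
    have hsum2 : ∑ j ∈ Finset.Icc 1 (M-1),
        ((1 + B) * (Real.exp (-(c * j)) + Real.exp (-(c * ((M:ℝ) - j)))))
        = (1 + B) * ((∑ j ∈ Finset.Icc 1 (M-1), Real.exp (-(c * j)))
          + ∑ j ∈ Finset.Icc 1 (M-1), Real.exp (-(c * ((M:ℝ) - j)))) := by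
      rw [← Finset.sum_add_distrib, Finset.mul_sum]
    rw [hsum2]
    have hB1' : (0:ℝ) < 1 + B := by linarith
    have hAM : (0:ℝ) < A * M := by positivity
    have hsumle : (∑ j ∈ Finset.Icc 1 (M-1), Real.exp (-(c * j)))
          + (∑ j ∈ Finset.Icc 1 (M-1), Real.exp (-(c * ((M:ℝ) - j)))) ≤ 2 * (1 / (1 - q)) := by
      linarith
    calc (A * M) * ((1 + B) * ((∑ j ∈ Finset.Icc 1 (M-1), Real.exp (-(c * j)))
          + ∑ j ∈ Finset.Icc 1 (M-1), Real.exp (-(c * ((M:ℝ) - j)))))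
        ≤ (A * M) * ((1 + B) * (2 * (1 / (1 - q)))) := by
          apply mul_le_mul_of_nonneg_left _ hAM.le
          exact mul_le_mul_of_nonneg_left hsumle hB1'.le
      _ = 2 * A * (1 + B) * (1 / (1 - q)) * M := by ring
  linarith
end
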